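/- Let z > 0 be real and n ≥ 1 an integer. Then the derivative of ν ↦ J_ν(z) at ν = −n equals (log(z/2) + γ)·J_{−n}(z) − (z/2)^{−n} · [ (−1)^n · ∑_{m=0}^{n−1} ((z²/4)^m/m!)·(n−m−1)! + ∑_{m=n}^∞ ((−z²/4)^m/(m!·(m−n)!))·H_{m−n} ], where γ is the Euler–Mascheroni constant and H_m = ∑_{j=1}^m 1/j (with H_0 = 0). -/

import Mathlib

open scoped BigOperators

/-- The reciprocal of the complex Gamma function, an entire function
(Mathlib's `Complex.Gamma` vanishes at nonpositive integers, so the inverse is `0` there). -/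
noncomputable def Grec (t : ℂ) : ℂ := (Complex.Gamma t)⁻¹

/-- `G k t` is the `k`-th derivative of the reciprocal Gamma function at `t`. -/
noncomputable def G (k : ℕ) (t : ℂ) : ℂ := iteratedDeriv k Grec t

/-- The Maclaurin coefficients of `1/Γ`: `c j = G^{(j)}(0)/j!`. -/
noncomputable def mcCoeff (j : ℕ) : ℂ := iteratedDeriv j Grec 0 / (j.factorial : ℂ)

/-- Bessel function of the first kind `J_ν(z)` for real `z > 0` and complex order `ν`,
with `(z/2)^ν = exp (ν log (z/2))`. -/
noncomputable def besselJ (z : ℝ) (ν : ℂ) : ℂ :=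
  Complex.exp (ν * Complex.log ((z : ℂ) / 2)) *
    ∑' m : ℕ, (-(z : ℂ) ^ 2 / 4) ^ m / ((m.factorial : ℂ) * Complex.Gamma (ν + 1 + m))

/-- Pochhammer symbol `(t)_m = t (t+1) ⋯ (t+m-1)`. -/
noncomputable def poch (t : ℂ) (m : ℕ) : ℂ := ∏ i ∈ Finset.range m, (t + i)

/-- `P m k t = (1/k!) dᵏ/dtᵏ (t)_m`. -/
noncomputable def P (m k : ℕ) (t : ℂ) : ℂ :=
  ((k.factorial : ℂ))⁻¹ * iteratedDeriv k (fun s => poch s m) t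

/-- `Q m k t = (1/k!) dᵏ/dtᵏ (1/(t)_m)`. -/
noncomputable def Q (m k : ℕ) (t : ℂ) : ℂ :=
  ((k.factorial : ℂ))⁻¹ * iteratedDeriv k (fun s => (poch s m)⁻¹) t

/-- Signed Stirling numbers of the first kind: `s(n,k)` is the coefficient of `x^k`
in `x(x-1)⋯(x-n+1)`. -/
noncomputable def stirS (n k : ℕ) : ℤ := (descPochhammer ℤ n).coeff k

/-- Modified generalized harmonic numbers `Ĥ_m^{(k)}`. -/
noncomputable def Hhat (m k : ℕ) : ℝ :=
  if m = 0 then (if k = 0 then 1 else 0)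
  else ∑ j ∈ Finset.Icc 1 m, (-1 : ℝ) ^ (j - 1) * (m.choose j) / (j : ℝ) ^ k

/-- Digamma function `ψ = Γ'/Γ`. -/
noncomputable def digamma (t : ℂ) : ℂ := deriv Complex.Gamma t / Complex.Gamma t

-- AUX LEMMAS (to be inserted above the theorem)
section BesselAux

open Metric Finset

lemma differentiable_Grec : Differentiable ℂ Grec := Complex.differentiable_one_div_Gamma

lemma Grec_step (t : ℂ) : Grec t = t * Grec (t + 1) := by
  unfold Grec
  rcases eq_or_ne t 0 with rfl | h
  · simp [Complex.Gamma_zero]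
  · rw [Complex.Gamma_add_one t h, mul_inv, mul_inv_cancel_left₀ h]

lemma Grec_shift (m : ℕ) (t : ℂ) :
    Grec t = (∏ i ∈ Finset.range m, (t + i)) * Grec (t + m) := by
  induction m with
  | zero => simp
  | succ m ih =>
    rw [ih, Finset.prod_range_succ, Grec_step (t + m)]
    push_cast
    rw [mul_assoc, add_assoc]

lemma Grec_nat (m : ℕ) : Grec ((m : ℂ) + 1) = ((m.factorial : ℂ))⁻¹ := by
  unfold Grec
  rw [Complex.Gamma_nat_eq_factorial]

lemma Grec_neg_nat (k : ℕ) : Grec (-(k : ℂ)) = 0 := by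
  unfold Grec
  rw [Complex.Gamma_neg_nat_eq_zero, inv_zero]

lemma prod_sub_nat (k : ℕ) :
    ∏ i ∈ Finset.range k, ((i : ℂ) - k) = (-1) ^ k * k.factorial := by
  induction k with
  | zero => simp
  | succ k ih =>
    rw [Finset.prod_range_succ']
    push_cast
    have : ∀ i ∈ Finset.range k, ((i : ℂ) + 1 - (k + 1)) = (i : ℂ) - k := by
      intro i _; ring
    rw [Finset.prod_congr rfl this, ih, Nat.factorial_succ]
    push_cast
    ring

lemma hasDerivAt_Grec_neg_nat (k : ℕ) :
    HasDerivAt Grec ((-1) ^ k * k.factorial) (-(k : ℂ)) := by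
  have hfun : Grec = fun t : ℂ =>
      ((∏ i ∈ Finset.range k, (t + i)) * Grec (t + (k + 1))) * (t + k) := by
    funext t
    rw [Grec_shift (k + 1) t, Finset.prod_range_succ]
    push_cast
    rw [← add_assoc]
    ring
  rw [hfun]
  have hg : Differentiable ℂ fun t : ℂ =>
      (∏ i ∈ Finset.range k, (t + i)) * Grec (t + (k + 1)) := by
    apply Differentiable.mul
    · exact Differentiable.fun_finsetProd fun i _ => differentiable_id.add_const _
    · exact differentiable_Grec.comp (differentiable_id.add_const _)
  have h1 : HasDerivAt (fun t : ℂ => t + k) 1 (-(k : ℂ)) := (hasDerivAt_id _).add_const _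
  have h2 := ((hg _).hasDerivAt.mul h1 :)
  refine h2.congr_deriv ?_
  have : (-(k : ℂ) + k) = 0 := by ring
  rw [this, mul_zero, zero_add, mul_one]
  have harg : (-(k : ℂ) + (k + 1)) = (0 : ℕ) + 1 := by push_cast; ring
  rw [harg, Grec_nat 0]
  simp only [Nat.factorial_zero, Nat.cast_one, inv_one, mul_one]
  have : ∀ i ∈ Finset.range k, (-(k : ℂ) + i) = (i : ℂ) - k := by intro i _; ring
  rw [Finset.prod_congr rfl this, prod_sub_nat]

lemma hasDerivAt_Grec_nat (m : ℕ) :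
    HasDerivAt Grec
      (((Real.eulerMascheroniConstant : ℂ) - (harmonic m : ℂ)) * ((m.factorial : ℂ))⁻¹)
      ((m : ℂ) + 1) := by
  have hΓ := Complex.hasDerivAt_Gamma_nat m
  have hne : Complex.Gamma ((m : ℂ) + 1) ≠ 0 := by
    rw [Complex.Gamma_nat_eq_factorial]
    exact_mod_cast Nat.cast_ne_zero.mpr m.factorial_ne_zero
  have := hΓ.inv hne
  refine this.congr_deriv ?_
  rw [Complex.Gamma_nat_eq_factorial]
  have hf : ((m.factorial : ℂ)) ≠ 0 := Nat.cast_ne_zero.mpr m.factorial_ne_zero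
  field_simp
  ring

lemma Grec_bound {C₀ : ℝ} (hC₀ : ∀ u ∈ closedBall (1 : ℂ) 1, ‖Grec u‖ ≤ C₀)
    (m : ℕ) {u : ℂ} (hu : ‖u - ((m : ℂ) + 1)‖ ≤ 1 / 2) :
    ‖Grec u‖ ≤ C₀ * 2 ^ m := by
  have key := Grec_shift m (u - m)
  have harg : u - (m : ℂ) + (m : ℂ) = u := by ring
  rw [harg] at key
  have hfac : ∀ i ∈ Finset.range m, (1 : ℝ) / 2 ≤ ‖u - (m : ℂ) + i‖ := by
    intro i _
    have h1 : u - (m : ℂ) + i = ((1 : ℂ) + i) + (u - ((m : ℂ) + 1)) := by ring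
    rw [h1]
    have h2 : ‖(1 : ℂ) + (i : ℂ)‖ = (1 : ℝ) + i := by
      have : ((1 : ℂ) + i) = (((1 + i : ℕ) : ℝ) : ℂ) := by push_cast; ring
      rw [this, Complex.norm_real, Real.norm_eq_abs, abs_of_nonneg (by positivity)]
      push_cast; ring
    calc (1 : ℝ) / 2 ≤ (1 + i) - 1 / 2 := by
          have : (0:ℝ) ≤ i := Nat.cast_nonneg i
          linarith
      _ ≤ ‖(1 : ℂ) + i‖ - ‖u - ((m : ℂ) + 1)‖ := by rw [h2]; linarith
      _ ≤ ‖(1 : ℂ) + (i : ℂ) + (u - ((m : ℂ) + 1))‖ := by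
          have h4 := norm_le_add_norm_add ((1 : ℂ) + i) (u - ((m : ℂ) + 1))
          linarith
  have hprod : ((1:ℝ)/2) ^ m ≤ ‖∏ i ∈ Finset.range m, (u - (m : ℂ) + i)‖ := by
    rw [norm_prod]
    calc ((1:ℝ)/2) ^ m = ∏ _i ∈ Finset.range m, ((1:ℝ)/2) := by
          rw [Finset.prod_const, Finset.card_range]
      _ ≤ ∏ i ∈ Finset.range m, ‖u - (m : ℂ) + i‖ :=
          Finset.prod_le_prod (fun _ _ => by norm_num) hfac
  have hbase : ‖Grec (u - m)‖ ≤ C₀ := by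
    apply hC₀
    rw [mem_closedBall, dist_eq_norm]
    calc ‖u - (m:ℂ) - 1‖ = ‖u - ((m:ℂ)+1)‖ := by ring_nf
      _ ≤ 1 := by linarith
  have hkey : ‖Grec (u - m)‖ = ‖∏ i ∈ Finset.range m, (u - (m : ℂ) + i)‖ * ‖Grec u‖ := by
    rw [key, norm_mul]
  have h2m : (0:ℝ) < ((1:ℝ)/2) ^ m := by positivity
  have hle : ((1:ℝ)/2) ^ m * ‖Grec u‖ ≤ C₀ := by
    calc ((1:ℝ)/2)^m * ‖Grec u‖ ≤ ‖∏ i ∈ Finset.range m, (u - (m : ℂ) + i)‖ * ‖Grec u‖ :=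
          mul_le_mul_of_nonneg_right hprod (norm_nonneg _)
      _ = ‖Grec (u - m)‖ := hkey.symm
      _ ≤ C₀ := hbase
  have h2 : ‖Grec u‖ ≤ C₀ / ((1:ℝ)/2) ^ m := by
    rw [le_div_iff₀ h2m]; linarith [hle]
  calc ‖Grec u‖ ≤ C₀ / ((1:ℝ)/2)^m := h2
    _ = C₀ * 2 ^ m := by rw [div_eq_mul_inv, ← inv_pow]; norm_num

lemma deriv_Grec_bound {C₀ : ℝ} (hC₀ : ∀ u ∈ closedBall (1 : ℂ) 1, ‖Grec u‖ ≤ C₀)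
    (m : ℕ) {t : ℂ} (ht : ‖t - ((m : ℂ) + 1)‖ < 1 / 4) :
    ‖deriv Grec t‖ ≤ 4 * (C₀ * 2 ^ m) := by
  have h := Complex.norm_deriv_le_of_forall_mem_sphere_norm_le (c := t) (R := 1/4)
    (C := C₀ * 2 ^ m) (by norm_num) (differentiable_Grec.diffContOnCl) ?_
  · calc ‖deriv Grec t‖ ≤ (C₀ * 2 ^ m) / (1/4) := h
      _ = 4 * (C₀ * 2 ^ m) := by ring
  · intro u hu
    apply Grec_bound hC₀
    rw [mem_sphere_iff_norm] at hu
    calc ‖u - ((m:ℂ)+1)‖ = ‖(u - t) + (t - ((m:ℂ)+1))‖ := by ring_nf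
      _ ≤ ‖u - t‖ + ‖t - ((m:ℂ)+1)‖ := norm_add_le _ _
      _ ≤ 1/4 + 1/4 := by rw [hu]; linarith
      _ = 1/2 := by norm_num

/-- working form of the Bessel summand -/
noncomputable def bTerm (z : ℝ) (m : ℕ) (ν : ℂ) : ℂ :=
  (-(z : ℂ) ^ 2 / 4) ^ m / (m.factorial : ℂ) * Grec (ν + (1 + m))

/-- its ν-derivative -/
noncomputable def bTerm' (z : ℝ) (m : ℕ) (ν : ℂ) : ℂ :=
  (-(z : ℂ) ^ 2 / 4) ^ m / (m.factorial : ℂ) * deriv Grec (ν + (1 + m))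

lemma hasDerivAt_bTerm (z : ℝ) (m : ℕ) (y : ℂ) :
    HasDerivAt (bTerm z m) (bTerm' z m y) y := by
  have h1 : HasDerivAt (fun ν : ℂ => ν + (1 + (m : ℂ))) 1 y := (hasDerivAt_id y).add_const _
  have h2 : HasDerivAt Grec (deriv Grec (y + (1 + (m : ℂ)))) (y + (1 + (m : ℂ))) :=
    (differentiable_Grec _).hasDerivAt
  have h3 := (h2.comp y h1).const_mul ((-(z : ℂ) ^ 2 / 4) ^ m / (m.factorial : ℂ))
  simp only [Function.comp_def, mul_one] at h3
  exact h3

lemma besselJ_eq_tsum_bTerm (z : ℝ) (ν : ℂ) :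
    besselJ z ν = Complex.exp (ν * Complex.log ((z : ℂ) / 2)) * ∑' m : ℕ, bTerm z m ν := by
  unfold besselJ
  congr 1
  refine tsum_congr fun m => ?_
  rw [bTerm, Grec, ← div_div, div_eq_mul_inv]
  congr 2
  ring

end BesselAux


/-- First derivative at a negative integer order `ν = −n`, `n ≥ 1`:
`∂/∂ν J_ν(z)|_{ν=−n} = (log(z/2) + γ) J_{−n}(z) − (z/2)^{−n} [(−1)ⁿ ∑_{m<n} (z²/4)ᵐ/m! (n−m−1)!
+ ∑_{m≥n} (−z²/4)ᵐ/(m!(m−n)!) H_{m−n}]` (the infinite series reindexed by `m ↦ m + n`). -/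
theorem deriv_besselJ_neg_nat (z : ℝ) (hz : 0 < z) (n : ℕ) (hn : 1 ≤ n) :
    deriv (fun ν => besselJ z ν) (-(n : ℂ)) =
      (Complex.log ((z : ℂ) / 2) + (Real.eulerMascheroniConstant : ℂ)) * besselJ z (-(n : ℂ)) -
        Complex.exp (-(n : ℂ) * Complex.log ((z : ℂ) / 2)) *
          ((-1) ^ n * ∑ m ∈ Finset.range n,
              ((z : ℂ) ^ 2 / 4) ^ m / (m.factorial : ℂ) * ((n - m - 1).factorial : ℂ) +
            ∑' m : ℕ, (-(z : ℂ) ^ 2 / 4) ^ (m + n) /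
              (((m + n).factorial : ℂ) * (m.factorial : ℂ)) *
                ∑ j ∈ Finset.Icc 1 m, (1 : ℂ) / (j : ℂ)) := by
  classical
  set L : ℂ := Complex.log ((z : ℂ) / 2) with hL
  set γ : ℂ := (Real.eulerMascheroniConstant : ℂ) with hγ
  set C : ℂ := -(z : ℂ) ^ 2 / 4 with hC
  set K : ℝ := ‖C‖ with hK
  obtain ⟨C₁, hC₁⟩ := (isCompact_closedBall (1 : ℂ) 1).exists_bound_of_continuousOn
    differentiable_Grec.continuous.continuousOn
  set C₀ : ℝ := max C₁ 0 with hC₀def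
  have hC₀ : ∀ u ∈ Metric.closedBall (1 : ℂ) 1, ‖Grec u‖ ≤ C₀ :=
    fun u hu => (hC₁ u hu).trans (le_max_left _ _)
  have hC₀0 : 0 ≤ C₀ := le_max_right _ _
  have hK0 : 0 ≤ K := norm_nonneg _
  -- the ball
  set s : Set ℂ := Metric.ball (-(n : ℂ)) (1/4) with hs
  have hmem : (-(n : ℂ)) ∈ s := Metric.mem_ball_self (by norm_num)
  -- summable bound on derivatives of the tail
  set u : ℕ → ℝ := fun m => K ^ (m + n) / ((m + n).factorial : ℝ) * (4 * (C₀ * 2 ^ m)) with hu_def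
  have hu : Summable u := by
    apply Summable.of_nonneg_of_le (fun m => ?_) (fun m => ?_)
      (((Real.summable_pow_div_factorial (2 * K)).mul_left (4 * C₀ * K ^ n)))
    · have h2 : (0:ℝ) ≤ 4 * (C₀ * 2 ^ m) :=
        mul_nonneg (by norm_num) (mul_nonneg hC₀0 (by positivity))
      exact mul_nonneg (by positivity) h2
    · have hfle : (m.factorial : ℝ) ≤ ((m + n).factorial : ℝ) := by
        exact_mod_cast Nat.factorial_le (Nat.le_add_right m n)
      have hm0 : (0:ℝ) < (m.factorial : ℝ) := by
        exact_mod_cast m.factorial_pos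
      have h1 : K ^ (m + n) / (((m + n).factorial : ℝ)) ≤ K ^ (m + n) / (m.factorial : ℝ) :=
        div_le_div_of_nonneg_left (pow_nonneg hK0 _) hm0 hfle
      calc u m ≤ K ^ (m + n) / (m.factorial : ℝ) * (4 * (C₀ * 2 ^ m)) :=
            mul_le_mul_of_nonneg_right h1
              (mul_nonneg (by norm_num) (mul_nonneg hC₀0 (by positivity)))
        _ = 4 * C₀ * K ^ n * ((2 * K) ^ m / (m.factorial : ℝ)) := by
            rw [pow_add, mul_pow]; ring
  -- each tail term has derivative bounded by u
  have hub : ∀ m : ℕ, ∀ y ∈ s, ‖bTerm' z (m + n) y‖ ≤ u m := by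
    intro m y hy
    have ht : ‖(y + (1 + ((m + n : ℕ) : ℂ))) - ((m : ℂ) + 1)‖ < 1 / 4 := by
      have h1 : (y + (1 + ((m + n : ℕ) : ℂ))) - ((m : ℂ) + 1) = y - (-(n : ℂ)) := by
        push_cast; ring
      rw [h1]
      have := Metric.mem_ball.mp hy
      rwa [dist_eq_norm] at this
    have hd := deriv_Grec_bound hC₀ m ht
    have hnorm : ‖bTerm' z (m + n) y‖ =
        K ^ (m + n) / (((m + n).factorial : ℝ)) * ‖deriv Grec (y + (1 + ((m + n : ℕ) : ℂ)))‖ := by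
      rw [bTerm', norm_mul, norm_div, norm_pow, Complex.norm_natCast, hK, hC]
    rw [hnorm, hu_def]
    have h2 : (0:ℝ) ≤ K ^ (m + n) / (((m + n).factorial : ℝ)) := by positivity
    calc K ^ (m + n) / (((m + n).factorial : ℝ)) * ‖deriv Grec (y + (1 + ((m + n : ℕ) : ℂ)))‖
        ≤ K ^ (m + n) / (((m + n).factorial : ℝ)) * (4 * (C₀ * 2 ^ m)) :=
          mul_le_mul_of_nonneg_left hd h2
      _ = K ^ (m + n) / (((m + n).factorial : ℝ)) * (4 * (C₀ * 2 ^ m)) := rfl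
  -- summability at the center
  have hcenter : ∀ m : ℕ, bTerm z (m + n) (-(n : ℂ)) =
      C ^ (m + n) / (((m + n).factorial : ℂ)) * ((m.factorial : ℂ))⁻¹ := by
    intro m
    rw [bTerm]
    congr 1
    have : (-(n : ℂ) + (1 + ((m + n : ℕ) : ℂ))) = (m : ℂ) + 1 := by push_cast; ring
    rw [this, Grec_nat]
  have hg0 : Summable fun m => bTerm z (m + n) (-(n : ℂ)) := by
    refine Summable.of_norm_bounded (g := fun m => K ^ n * (K ^ m / (m.factorial : ℝ)))
      ((Real.summable_pow_div_factorial K).mul_left (K ^ n)) fun m => ?_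
    rw [hcenter m]
    have h1 : ‖C ^ (m + n) / (((m + n).factorial : ℂ)) * ((m.factorial : ℂ))⁻¹‖ =
        K ^ (m + n) / (((m + n).factorial : ℝ)) * ((m.factorial : ℝ))⁻¹ := by
      rw [norm_mul, norm_div, norm_pow, norm_inv, Complex.norm_natCast, Complex.norm_natCast]
    rw [h1]
    have h2 : K ^ (m + n) / (((m + n).factorial : ℝ)) ≤ K ^ (m + n) := by
      apply div_le_self (pow_nonneg hK0 _)
      exact_mod_cast Nat.one_le_iff_ne_zero.mpr (Nat.factorial_ne_zero _)
    calc K ^ (m + n) / (((m + n).factorial : ℝ)) * ((m.factorial : ℝ))⁻¹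
        ≤ K ^ (m + n) * ((m.factorial : ℝ))⁻¹ :=
          mul_le_mul_of_nonneg_right h2 (by positivity)
      _ = K ^ n * (K ^ m / (m.factorial : ℝ)) := by rw [pow_add]; ring
  -- termwise differentiation of the tail
  have hT : HasDerivAt (fun ν => ∑' m : ℕ, bTerm z (m + n) ν)
      (∑' m : ℕ, bTerm' z (m + n) (-(n : ℂ))) (-(n : ℂ)) :=
    hasDerivAt_tsum_of_isPreconnected hu Metric.isOpen_ball
      (convex_ball _ _).isPreconnected
      (fun m y _ => hasDerivAt_bTerm z (m + n) y) hub hmem hg0 hmem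
  -- summability on the ball
  have hSum : ∀ y ∈ s, Summable fun m => bTerm z m y := by
    intro y hy
    have h1 : Summable fun m => bTerm z (m + n) y :=
      summable_of_summable_hasDerivAt_of_isPreconnected hu Metric.isOpen_ball
        (convex_ball _ _).isPreconnected
        (fun m y _ => hasDerivAt_bTerm z (m + n) y) hub hmem hg0 hy
    exact (summable_nat_add_iff n).mp h1
  have hS_eq : ∀ y ∈ s, (∑' m : ℕ, bTerm z m y) =
      (∑ i ∈ Finset.range n, bTerm z i y) + ∑' m : ℕ, bTerm z (m + n) y :=
    fun y hy => (Summable.sum_add_tsum_nat_add n (hSum y hy)).symm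
  -- derivative of the full series
  have hS : HasDerivAt (fun ν => ∑' m : ℕ, bTerm z m ν)
      ((∑ i ∈ Finset.range n, bTerm' z i (-(n : ℂ))) +
        ∑' m : ℕ, bTerm' z (m + n) (-(n : ℂ))) (-(n : ℂ)) := by
    have hHead : HasDerivAt (fun ν => ∑ i ∈ Finset.range n, bTerm z i ν)
        (∑ i ∈ Finset.range n, bTerm' z i (-(n : ℂ))) (-(n : ℂ)) :=
      HasDerivAt.fun_sum fun i _ => hasDerivAt_bTerm z i _
    refine (hHead.add hT).congr_of_eventuallyEq ?_
    filter_upwards [Metric.isOpen_ball.mem_nhds hmem] with y hy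
    exact hS_eq y hy
  -- derivative of the exponential factor
  have hE : HasDerivAt (fun ν : ℂ => Complex.exp (ν * L))
      (L * Complex.exp (-(n : ℂ) * L)) (-(n : ℂ)) := by
    have h1 : HasDerivAt (fun ν : ℂ => ν * L) L (-(n : ℂ)) := by
      simpa using (hasDerivAt_id (-(n : ℂ))).mul_const L
    simpa [mul_comm] using h1.cexp
  -- derivative of besselJ
  have hfun : (fun ν => besselJ z ν) =
      fun ν => Complex.exp (ν * L) * ∑' m : ℕ, bTerm z m ν := by
    funext ν; exact besselJ_eq_tsum_bTerm z ν
  have hB : HasDerivAt (fun ν => besselJ z ν)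
      (L * Complex.exp (-(n : ℂ) * L) * (∑' m : ℕ, bTerm z m (-(n : ℂ))) +
        Complex.exp (-(n : ℂ) * L) *
          ((∑ i ∈ Finset.range n, bTerm' z i (-(n : ℂ))) +
            ∑' m : ℕ, bTerm' z (m + n) (-(n : ℂ)))) (-(n : ℂ)) := by
    rw [hfun]
    exact hE.mul hS
  rw [hB.deriv, besselJ_eq_tsum_bTerm z (-(n : ℂ))]
  -- value of the head derivative sum
  have hHeadVal : (∑ i ∈ Finset.range n, bTerm' z i (-(n : ℂ))) =
      -((-1) ^ n * ∑ m ∈ Finset.range n,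
          ((z : ℂ) ^ 2 / 4) ^ m / (m.factorial : ℂ) * ((n - m - 1).factorial : ℂ)) := by
    rw [Finset.mul_sum, ← Finset.sum_neg_distrib]
    refine Finset.sum_congr rfl fun i hi => ?_
    rw [Finset.mem_range] at hi
    set k : ℕ := n - 1 - i with hk_def
    have hk : i + k + 1 = n := by omega
    have hk' : n - i - 1 = k := by omega
    rw [hk']
    have harg : (-(n : ℂ) + (1 + (i : ℂ))) = -(k : ℂ) := by
      have : ((i : ℂ) + (k : ℂ) + 1) = (n : ℂ) := by exact_mod_cast congrArg (Nat.cast : ℕ → ℂ) hk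
      linear_combination this
    rw [bTerm', harg, (hasDerivAt_Grec_neg_nat k).deriv]
    have hCpow : C ^ i = (-1 : ℂ) ^ i * ((z : ℂ) ^ 2 / 4) ^ i := by
      rw [hC, ← mul_pow]; ring_nf
    have hsign : (-1 : ℂ) ^ n = (-1 : ℂ) ^ i * (-1 : ℂ) ^ k * (-1) := by
      rw [← hk, pow_add, pow_add, pow_one]
    rw [hCpow, hsign]
    ring
  -- value of the tail derivative sum
  have hTailVal : (∑' m : ℕ, bTerm' z (m + n) (-(n : ℂ))) =
      γ * (∑' m : ℕ, bTerm z (m + n) (-(n : ℂ))) -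
        ∑' m : ℕ, (-(z : ℂ) ^ 2 / 4) ^ (m + n) /
          (((m + n).factorial : ℂ) * (m.factorial : ℂ)) *
            ∑ j ∈ Finset.Icc 1 m, (1 : ℂ) / (j : ℂ) := by
    have hterm : ∀ m : ℕ, bTerm' z (m + n) (-(n : ℂ)) =
        γ * bTerm z (m + n) (-(n : ℂ)) -
          (-(z : ℂ) ^ 2 / 4) ^ (m + n) / (((m + n).factorial : ℂ) * (m.factorial : ℂ)) *
            ∑ j ∈ Finset.Icc 1 m, (1 : ℂ) / (j : ℂ) := by
      intro m
      rw [bTerm', hcenter m]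
      have harg : (-(n : ℂ) + (1 + ((m + n : ℕ) : ℂ))) = (m : ℂ) + 1 := by push_cast; ring
      rw [harg, (hasDerivAt_Grec_nat m).deriv]
      have hH : ((harmonic m : ℚ) : ℂ) = ∑ j ∈ Finset.Icc 1 m, (1 : ℂ) / (j : ℂ) := by
        rw [harmonic_eq_sum_Icc]
        push_cast
        simp [one_div]
      rw [hH, ← hC]
      ring
    rw [tsum_congr hterm]
    have hBsum : Summable fun m : ℕ =>
        (-(z : ℂ) ^ 2 / 4) ^ (m + n) / (((m + n).factorial : ℂ) * (m.factorial : ℂ)) *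
          ∑ j ∈ Finset.Icc 1 m, (1 : ℂ) / (j : ℂ) := by
      refine Summable.of_norm_bounded (g := fun m => K ^ n * ((2 * K) ^ m / (m.factorial : ℝ)))
        ((Real.summable_pow_div_factorial (2 * K)).mul_left (K ^ n)) fun m => ?_
      have hHn : ‖∑ j ∈ Finset.Icc 1 m, (1 : ℂ) / (j : ℂ)‖ ≤ (m : ℝ) := by
        calc ‖∑ j ∈ Finset.Icc 1 m, (1 : ℂ) / (j : ℂ)‖
            ≤ ∑ j ∈ Finset.Icc 1 m, ‖(1 : ℂ) / (j : ℂ)‖ := norm_sum_le _ _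
          _ ≤ ∑ _j ∈ Finset.Icc 1 m, (1 : ℝ) := by
              refine Finset.sum_le_sum fun j hj => ?_
              rw [Finset.mem_Icc] at hj
              rw [norm_div, norm_one, Complex.norm_natCast]
              have hj0 : (0:ℝ) < (j : ℝ) := by exact_mod_cast Nat.lt_of_lt_of_le Nat.zero_lt_one hj.1
              rw [div_le_one hj0]
              exact_mod_cast hj.1
          _ = (m : ℝ) := by
              rw [Finset.sum_const, Nat.card_Icc]
              simp
      have hnorm1 : ‖(-(z : ℂ) ^ 2 / 4) ^ (m + n) /
          (((m + n).factorial : ℂ) * (m.factorial : ℂ))‖ =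
          K ^ (m + n) / (((m + n).factorial : ℝ) * (m.factorial : ℝ)) := by
        rw [norm_div, norm_pow, norm_mul, Complex.norm_natCast, Complex.norm_natCast, hK, hC]
      have hfac1 : (1 : ℝ) ≤ ((m + n).factorial : ℝ) := by
        exact_mod_cast Nat.one_le_iff_ne_zero.mpr (Nat.factorial_ne_zero _)
      have hm0 : (0:ℝ) < (m.factorial : ℝ) := by exact_mod_cast m.factorial_pos
      have h2 : K ^ (m + n) / (((m + n).factorial : ℝ) * (m.factorial : ℝ)) ≤
          K ^ (m + n) / (m.factorial : ℝ) := by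
        apply div_le_div_of_nonneg_left (pow_nonneg hK0 _) hm0
        nlinarith [hm0]
      have hm2 : (m : ℝ) ≤ 2 ^ m := by exact_mod_cast (Nat.lt_two_pow_self (n := m)).le
      calc ‖(-(z : ℂ) ^ 2 / 4) ^ (m + n) /
            (((m + n).factorial : ℂ) * (m.factorial : ℂ)) *
            ∑ j ∈ Finset.Icc 1 m, (1 : ℂ) / (j : ℂ)‖
          = K ^ (m + n) / (((m + n).factorial : ℝ) * (m.factorial : ℝ)) *
            ‖∑ j ∈ Finset.Icc 1 m, (1 : ℂ) / (j : ℂ)‖ := by rw [norm_mul, hnorm1]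
        _ ≤ K ^ (m + n) / (m.factorial : ℝ) * (m : ℝ) :=
            mul_le_mul h2 hHn (norm_nonneg _) (by positivity)
        _ ≤ K ^ (m + n) / (m.factorial : ℝ) * (2 : ℝ) ^ m :=
            mul_le_mul_of_nonneg_left hm2 (by positivity)
        _ = K ^ n * ((2 * K) ^ m / (m.factorial : ℝ)) := by
            rw [pow_add, mul_pow]; ring
    rw [Summable.tsum_sub (hg0.mul_left γ) hBsum, tsum_mul_left]
  -- head terms of the series vanish at -n
  have hZero : (∑' m : ℕ, bTerm z m (-(n : ℂ))) = ∑' m : ℕ, bTerm z (m + n) (-(n : ℂ)) := by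
    rw [hS_eq _ hmem]
    have : ∀ i ∈ Finset.range n, bTerm z i (-(n : ℂ)) = 0 := by
      intro i hi
      rw [Finset.mem_range] at hi
      rw [bTerm]
      have harg : (-(n : ℂ) + (1 + (i : ℂ))) = -((n - 1 - i : ℕ) : ℂ) := by
        have h1 : ((n - 1 - i : ℕ) : ℂ) = (n : ℂ) - 1 - i := by
          have : ((n - 1 - i : ℕ) : ℤ) = (n : ℤ) - 1 - i := by omega
          exact_mod_cast congrArg (fun x : ℤ => (x : ℂ)) this
        rw [h1]; ring
      rw [harg, Grec_neg_nat, mul_zero]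
    rw [Finset.sum_eq_zero this, zero_add]
  rw [hHeadVal, hTailVal, hZero]
  ring
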